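/- Fix d > 2. Define α_d(t,h) = ((d-1)^{t/2-h+1} - 1)/((d-1)^{t/2+1} - 1) for even t ≥ 2 and 1 ≤ h ≤ t/2. Define vectors p^{(t)} ∈ R^{t/2} for even t by p^{(t)}_h = (d-2)(d-1)^{h-1}/((d-1)^{t/2} - 1). Then p^{(2)} = (1), and for every even t, p^{(t+2)}_h = α_d(t,h) p^{(t)}_h + (1 - α_d(t,h-1)) p^{(t)}_{h-1} for 1 ≤ h ≤ t/2 + 1 (with the conventions p^{(t)}_0 = 0, p^{(t)}_{t/2+1} = 0, and α_d(t,0) arbitrary since multiplied by 0). -/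

import Mathlib

/-- Adaptive-diffusion transition probability for `d > 2`, at even time `t = 2m`
and state `h`: `α_d(t,h) = ((d-1)^(m-h+1) - 1)/((d-1)^(m+1) - 1)`. -/
noncomputable def adAlpha (d m h : ℕ) : ℝ :=
  (((d : ℝ) - 1) ^ (m - h + 1) - 1) / (((d : ℝ) - 1) ^ (m + 1) - 1)

/-- Designed source-distance distribution at even time `t = 2m`:
`p^{(t)}_h = (d-2)(d-1)^(h-1)/((d-1)^m - 1)` for `1 ≤ h ≤ m`, and `0` otherwise. -/
noncomputable def adP (d m h : ℕ) : ℝ :=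
  if 1 ≤ h ∧ h ≤ m then
    ((d : ℝ) - 2) * ((d : ℝ) - 1) ^ (h - 1) / (((d : ℝ) - 1) ^ m - 1)
  else 0

/-- For `d > 2`, the initial distribution is `p^{(2)} = (1)`, and the designed
distribution is invariant under the adaptive-diffusion Markov transition:
`p^{(t+2)}_h = α_d(t,h) p^{(t)}_h + (1 - α_d(t,h-1)) p^{(t)}_{h-1}` (with the
conventions `p^{(t)}_0 = 0` and `p^{(t)}_{t/2+1} = 0`). -/
theorem adaptive_diffusion_invariance (d : ℕ) (hd : 2 < d) :
    adP d 1 1 = 1 ∧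
    ∀ m : ℕ, 1 ≤ m → ∀ h : ℕ, 1 ≤ h → h ≤ m + 1 →
      adP d (m + 1) h = adAlpha d m h * adP d m h
        + (1 - adAlpha d m (h - 1)) * adP d m (h - 1) := by
  have hd3 : (3 : ℕ) ≤ d := hd
  have hx2 : (2 : ℝ) ≤ (d : ℝ) - 1 := by
    have : (3 : ℝ) ≤ (d : ℝ) := by exact_mod_cast hd3
    linarith
  set x : ℝ := (d : ℝ) - 1 with hxdef
  have hx1 : (1 : ℝ) < x := by linarith
  have hpow : ∀ n : ℕ, 1 ≤ n → x ^ n - 1 ≠ 0 := by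
    intro n hn
    have : 1 < x ^ n := one_lt_pow₀ hx1 (by omega)
    intro h; nlinarith
  have hd2 : (d : ℝ) - 2 = x - 1 := by rw [hxdef]; ring
  constructor
  · have hx0 : x - 1 ≠ 0 := by linarith
    simp only [adP, hd2, ← hxdef]
    norm_num
    field_simp
    exact hx0
  · intro m hm h h1 hle
    have hA1 : x ^ (m + 1) - 1 ≠ 0 := hpow (m + 1) (by omega)
    have hA0 : x ^ m - 1 ≠ 0 := hpow m hm
    rcases eq_or_lt_of_le h1 with h1' | h2
    · -- case h = 1
      subst h1'
      have em : m - 1 + 1 = m := by omega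
      simp only [adP, adAlpha, hd2, ← hxdef, em]
      rw [if_pos ⟨le_refl 1, by omega⟩, if_pos ⟨le_refl 1, hm⟩,
        if_neg (by omega)]
      norm_num
      field_simp
    · rcases eq_or_lt_of_le hle with h3 | h3
      · -- case h = m + 1
        obtain ⟨k, rfl⟩ : ∃ k, m = k + 1 := ⟨m - 1, by omega⟩
        subst h3
        have e1 : k + 1 - (k + 1 + 1) + 1 = 1 := by omega
        have e2 : k + 1 + 1 - 1 = k + 1 := by omega
        have e3 : k + 1 - (k + 1) + 1 = 1 := by omega
        have e4 : k + 1 + 1 - 1 - 1 = k := by omega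
        simp only [adP, adAlpha, hd2, ← hxdef, e1, e2, e3, e4, Nat.add_sub_cancel]
        rw [if_pos ⟨by omega, le_refl _⟩, if_neg (by omega),
          if_pos ⟨by omega, by omega⟩]
        have hB : x ^ (k + 1 + 1) - 1 ≠ 0 := hpow _ (by omega)
        have hC : x ^ (k + 1) - 1 ≠ 0 := hpow _ (by omega)
        field_simp
        ring
      · -- case 2 ≤ h ≤ m
        obtain ⟨k, rfl⟩ : ∃ k, h = k + 2 := ⟨h - 2, by omega⟩
        obtain ⟨j, rfl⟩ : ∃ j, m = k + 2 + j := ⟨m - (k + 2), by omega⟩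
        have e1 : k + 2 + j - (k + 2) + 1 = j + 1 := by omega
        have e2 : k + 2 - 1 = k + 1 := by omega
        have e3 : k + 2 + j - (k + 2 - 1) + 1 = j + 2 := by omega
        have e4 : k + 2 - 1 - 1 = k := by omega
        have e5 : 2 + k + j - (1 + k) = j + 1 := by omega
        have e6 : k + 2 + j - (k + 1) + 1 = j + 2 := by omega
        simp only [adP, adAlpha, hd2, ← hxdef, e1, e2, e3, e4, e5, e6, Nat.add_sub_cancel]
        rw [if_pos ⟨by omega, by omega⟩, if_pos ⟨by omega, by omega⟩,
          if_pos ⟨by omega, by omega⟩]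
        field_simp
        ring
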